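/- Let θ > 0 and let κ, κ' : [0,θ] → ℝ be continuous with κ(x) ≥ κ'(x) for all x ∈ [0,θ]. Let f, g : [0,1] → ℝ be twice continuously differentiable functions with f(0) = g(0) = 0, f(1) = g(1) = 1, f(t) > 0 and g(t) > 0 for all t ∈ (0,1], satisfying f''(t) + κ(tθ)·θ²·f(t) = 0 and g''(t) + κ'(tθ)·θ²·g(t) = 0 on [0,1]. Then f(t) ≥ g(t) for all t ∈ [0,1]. (Monotonicity of the distortion coefficients σ_κ^{(t)}(θ) in the curvature function κ.) -/

import Mathlib

open Set

/-- `u` is a (twice continuously differentiable) solution of `u'' + κ·u = 0` on the set `s`,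
with first and second derivative functions `u'` and `u''`. -/
def SturmSol (κ u u' u'' : ℝ → ℝ) (s : Set ℝ) : Prop :=
  (∀ t ∈ s, HasDerivWithinAt u (u' t) s t) ∧
  (∀ t ∈ s, HasDerivWithinAt u' (u'' t) s t) ∧
  ContinuousOn u'' s ∧
  (∀ t ∈ s, u'' t + κ t * u t = 0)

/-- Monotonicity of the distortion coefficients `σ_κ^{(t)}(θ)` in the curvature function `κ`. -/
theorem distortion_monotone
    (θ : ℝ) (hθ : 0 < θ)
    (κ κ' : ℝ → ℝ)
    (hκ : ContinuousOn κ (Icc 0 θ)) (hκ' : ContinuousOn κ' (Icc 0 θ))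
    (hle : ∀ x ∈ Icc 0 θ, κ' x ≤ κ x)
    (f f₁ f₂ g g₁ g₂ : ℝ → ℝ)
    (hf : SturmSol (fun t => κ (t * θ) * θ ^ 2) f f₁ f₂ (Icc 0 1))
    (hg : SturmSol (fun t => κ' (t * θ) * θ ^ 2) g g₁ g₂ (Icc 0 1))
    (hf0 : f 0 = 0) (hg0 : g 0 = 0) (hf1 : f 1 = 1) (hg1 : g 1 = 1)
    (hfpos : ∀ t ∈ Ioc (0:ℝ) 1, 0 < f t)
    (hgpos : ∀ t ∈ Ioc (0:ℝ) 1, 0 < g t) :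
    ∀ t ∈ Icc (0:ℝ) 1, g t ≤ f t := by
  obtain ⟨hfd, hfd1, _, hfe⟩ := hf
  obtain ⟨hgd, hgd1, _, hge⟩ := hg
  have hfc : ContinuousOn f (Icc 0 1) := fun t ht => (hfd t ht).continuousWithinAt
  have hgc : ContinuousOn g (Icc 0 1) := fun t ht => (hgd t ht).continuousWithinAt
  have hf1c : ContinuousOn f₁ (Icc 0 1) := fun t ht => (hfd1 t ht).continuousWithinAt
  have hg1c : ContinuousOn g₁ (Icc 0 1) := fun t ht => (hgd1 t ht).continuousWithinAt
  set W : ℝ → ℝ := fun t => f₁ t * g t - f t * g₁ t with hW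
  have hWc : ContinuousOn W (Icc 0 1) := (hf1c.mul hgc).sub (hfc.mul hg1c)
  have hmem : ∀ t ∈ Ioo (0:ℝ) 1, Icc (0:ℝ) 1 ∈ nhds t := fun t ht =>
    Icc_mem_nhds ht.1 ht.2
  have hWderiv : ∀ t ∈ Ioo (0:ℝ) 1, HasDerivAt W (f₂ t * g t - f t * g₂ t) t := by
    intro t ht
    have h1 := ((hfd1 t (Ioo_subset_Icc_self ht)).hasDerivAt (hmem t ht)).mul
      ((hgd t (Ioo_subset_Icc_self ht)).hasDerivAt (hmem t ht))
    have h2 := ((hfd t (Ioo_subset_Icc_self ht)).hasDerivAt (hmem t ht)).mul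
      ((hgd1 t (Ioo_subset_Icc_self ht)).hasDerivAt (hmem t ht))
    have h3 := h1.sub h2
    exact h3.congr_deriv (by ring)
  have hWanti : AntitoneOn W (Icc 0 1) := by
    apply antitoneOn_of_deriv_nonpos (convex_Icc 0 1) hWc
    · intro t ht
      rw [interior_Icc] at ht
      exact ((hWderiv t ht).differentiableAt).differentiableWithinAt
    · intro t ht
      rw [interior_Icc] at ht
      rw [(hWderiv t ht).deriv]
      have hfe' := hfe t (Ioo_subset_Icc_self ht)
      have hge' := hge t (Ioo_subset_Icc_self ht)
      simp only at hfe' hge'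
      have hfp := hfpos t ⟨ht.1, le_of_lt ht.2⟩
      have hgp := hgpos t ⟨ht.1, le_of_lt ht.2⟩
      have hk := hle (t * θ) ⟨mul_nonneg ht.1.le hθ.le, by nlinarith [ht.2, hθ]⟩
      have hf2 : f₂ t = -(κ (t * θ) * θ ^ 2 * f t) := by linarith
      have hg2 : g₂ t = -(κ' (t * θ) * θ ^ 2 * g t) := by linarith
      rw [hf2, hg2]
      nlinarith [mul_nonneg (mul_nonneg (sub_nonneg.mpr hk) (sq_nonneg θ))
          (mul_pos hfp hgp).le]
  have hW0 : W 0 = 0 := by simp [hW, hf0, hg0]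
  have hWle : ∀ t ∈ Icc (0:ℝ) 1, W t ≤ 0 := by
    intro t ht
    have := hWanti (left_mem_Icc.mpr zero_le_one) ht ht.1
    rwa [hW0] at this
  intro t ht
  rcases eq_or_lt_of_le ht.1 with h0 | h0
  · rw [← h0]; simp [hf0, hg0]
  rcases eq_or_lt_of_le ht.2 with h1 | h1
  · rw [h1, hf1, hg1]
  -- 0 < t < 1
  have hfpos' : ∀ s ∈ Icc t 1, 0 < f s := fun s hs =>
    hfpos s ⟨lt_of_lt_of_le h0 hs.1, hs.2⟩
  have hsub : Icc t 1 ⊆ Icc (0:ℝ) 1 := Icc_subset_Icc h0.le le_rfl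
  have hqc : ContinuousOn (fun s => g s / f s) (Icc t 1) :=
    (hgc.mono hsub).div (hfc.mono hsub) (fun s hs => (hfpos' s hs).ne')
  have hqd : ∀ s ∈ Ioo t 1, HasDerivAt (fun s => g s / f s)
      ((g₁ s * f s - g s * f₁ s) / (f s) ^ 2) s := by
    intro s hs
    have hs' : s ∈ Ioo (0:ℝ) 1 := ⟨h0.trans hs.1, hs.2⟩
    exact ((hgd s (Ioo_subset_Icc_self hs')).hasDerivAt (hmem s hs')).div
      ((hfd s (Ioo_subset_Icc_self hs')).hasDerivAt (hmem s hs'))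
      (hfpos s ⟨hs'.1, hs'.2.le⟩).ne'
  have hmono : MonotoneOn (fun s => g s / f s) (Icc t 1) := by
    apply monotoneOn_of_deriv_nonneg (convex_Icc t 1) hqc
    · intro s hs; rw [interior_Icc] at hs
      exact ((hqd s hs).differentiableAt).differentiableWithinAt
    · intro s hs; rw [interior_Icc] at hs
      rw [(hqd s hs).deriv]
      have hWle' := hWle s (Ioo_subset_Icc_self ⟨h0.trans hs.1, hs.2⟩)
      apply div_nonneg _ (sq_nonneg _)
      simp only [hW] at hWle'
      nlinarith
  have hq := hmono (left_mem_Icc.mpr h1.le) (right_mem_Icc.mpr h1.le) h1.le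
  simp only at hq
  rw [hf1, hg1, div_one] at hq
  have hfp := hfpos' t (left_mem_Icc.mpr h1.le)
  calc g t = (g t / f t) * f t := by field_simp
    _ ≤ 1 * f t := by nlinarith
    _ = f t := one_mul _
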